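/- Consider the two-marginal greedy coupling procedure applied to probability vectors p, q on [n]: starting from the n×n zero matrix, at each iteration let a = argmaxᵢ p(i), b = argmaxᵢ q(i), r = min(p(a), q(b)); assign r to entry (a,b) of the joint matrix and update p(a) ← p(a) − r, q(b) ← q(b) − r; repeat until p = q = 0. Then the bipartite support graph of the output matrix M — the bipartite graph on [n] ⊔ [n] with an edge (i,j) whenever M(i,j) ≠ 0 — contains no cycle. Consequently (combined with the fact that acyclic-support nonnegative matrices are masked submatrices of rank-1 matrices), the output of the greedy algorithm satisfies the KKT conditions of the minimum entropy coupling problem for two marginals and is a local optimum. -/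

import Mathlib

/-- The bipartite support graph of an `n × n` matrix `M`: left vertices are the rows,
right vertices are the columns, and row `i` is adjacent to column `j` exactly when
`M i j ≠ 0`. -/
def supportGraph (n : ℕ) (M : Fin n → Fin n → ℝ) : SimpleGraph (Fin n ⊕ Fin n) where
  Adj a b :=
    (∃ i j, a = Sum.inl i ∧ b = Sum.inr j ∧ M i j ≠ 0) ∨
    (∃ i j, a = Sum.inr j ∧ b = Sum.inl i ∧ M i j ≠ 0)
  symm := by
    constructor
    rintro a b (⟨i, j, rfl, rfl, h⟩ | ⟨i, j, rfl, rfl, h⟩)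
    · exact Or.inr ⟨i, j, rfl, rfl, h⟩
    · exact Or.inl ⟨i, j, rfl, rfl, h⟩
  loopless := by
    constructor
    rintro a (⟨i, j, rfl, hb, h⟩ | ⟨i, j, rfl, hb, h⟩) <;> simp at hb

/-- `P` is a coupling of the distributions `p` and `q` on `[n]`: an `n × n` matrix with
nonnegative entries, row sums `p` and column sums `q`. -/
def IsCoupling {n : ℕ} (p q : Fin n → ℝ) (P : Fin n → Fin n → ℝ) : Prop :=
  (∀ i j, 0 ≤ P i j) ∧ (∀ i, ∑ j, P i j = p i) ∧ (∀ j, ∑ i, P i j = q j)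

/-- Shannon entropy (base 2) of an `n × n` joint distribution matrix. -/
noncomputable def matrixEntropy {n : ℕ} (P : Fin n → Fin n → ℝ) : ℝ :=
  -∑ i, ∑ j, P i j * Real.logb 2 (P i j)

/-- `Greedy n p q M`: the matrix `M` is a possible output of the two-marginal greedy
coupling procedure run on the (residual) marginal vectors `p`, `q`.  Starting from the
zero matrix, each step picks `a = argmaxᵢ p(i)`, `b = argmaxⱼ q(j)`, sets
`r = min (p a) (q b)`, assigns mass `r` to entry `(a, b)` and subtracts `r` from `p a`
and from `q b`; the procedure stops when `p = q = 0`. -/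
inductive Greedy (n : ℕ) : (Fin n → ℝ) → (Fin n → ℝ) → (Fin n → Fin n → ℝ) → Prop
  | zero : Greedy n (fun _ => 0) (fun _ => 0) (fun _ _ => 0)
  | step (p q : Fin n → ℝ) (M : Fin n → Fin n → ℝ) (a b : Fin n) (r : ℝ)
      (ha : ∀ i, p i ≤ p a) (hb : ∀ j, q j ≤ q b) (hr : r = min (p a) (q b))
      (hrec : Greedy n (Function.update p a (p a - r))
        (Function.update q b (q b - r)) M) :
      Greedy n p q (fun i j => M i j + if i = a ∧ j = b then r else 0)

lemma sum_update_aux {n : ℕ} (p : Fin n → ℝ) (a : Fin n) (c : ℝ) :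
    ∑ i, Function.update p a c i = (∑ i, p i) - p a + c := by
  rw [Finset.sum_update_of_mem (Finset.mem_univ a),
    Finset.sum_sdiff_eq_sub (Finset.subset_univ _)]
  simp
  ring

lemma greedy_isCoupling {n : ℕ} {p q : Fin n → ℝ} {M : Fin n → Fin n → ℝ}
    (h : Greedy n p q M) :
    (∀ i, 0 ≤ p i) → (∀ j, 0 ≤ q j) → (∑ i, p i = ∑ j, q j) → IsCoupling p q M := by
  induction h with
  | zero =>
    intro _ _ _
    exact ⟨fun _ _ => le_refl 0, fun i => by simp, fun j => by simp⟩
  | step p q M a b r ha hb hr hrec ih =>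
    intro hp hq hs
    have hr0 : 0 ≤ r := hr ▸ le_min (hp a) (hq b)
    have hrpa : r ≤ p a := hr ▸ min_le_left _ _
    have hrqb : r ≤ q b := hr ▸ min_le_right _ _
    have hp' : ∀ i, 0 ≤ Function.update p a (p a - r) i := by
      intro i
      rcases eq_or_ne i a with rfl | hi
      · simpa using sub_nonneg.2 hrpa
      · simpa [Function.update_of_ne hi] using hp i
    have hq' : ∀ j, 0 ≤ Function.update q b (q b - r) j := by
      intro j
      rcases eq_or_ne j b with rfl | hj
      · simpa using sub_nonneg.2 hrqb
      · simpa [Function.update_of_ne hj] using hq j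
    have hs' : ∑ i, Function.update p a (p a - r) i
        = ∑ j, Function.update q b (q b - r) j := by
      rw [sum_update_aux, sum_update_aux, hs]
      ring
    obtain ⟨hMnn, hMrow, hMcol⟩ := ih hp' hq' hs'
    refine ⟨fun i j => ?_, fun i => ?_, fun j => ?_⟩
    · by_cases hij : i = a ∧ j = b
      · simpa [hij] using add_nonneg (hMnn i j) hr0
      · simpa [hij] using hMnn i j
    · have hite : ∑ j, (if i = a ∧ j = b then r else 0) = if i = a then r else 0 := by
        rcases eq_or_ne i a with rfl | hi
        · simp
        · simp [hi]
      rw [Finset.sum_add_distrib, hMrow i, hite]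
      rcases eq_or_ne i a with rfl | hi
      · simp
      · simp [Function.update_of_ne hi, hi]
    · have hite : ∑ i, (if i = a ∧ j = b then r else 0) = if j = b then r else 0 := by
        rcases eq_or_ne j b with rfl | hj
        · simp
        · simp [hj]
      rw [Finset.sum_add_distrib, hMcol j, hite]
      rcases eq_or_ne j b with rfl | hj
      · simp
      · simp [Function.update_of_ne hj, hj]

open SimpleGraph

lemma firstEdge_mem {V : Type*} {G : SimpleGraph V} {a b : V} (p : G.Walk a b) (hp : ¬ p.Nil) :
    s(a, p.getVert 1) ∈ p.edges := by
  cases p with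
  | nil => simp at hp
  | cons h q => simp [Walk.getVert_cons_succ, Walk.getVert_zero, Walk.edges_cons]

lemma acyclic_pendant {V : Type*} [DecidableEq V] {G H : SimpleGraph V} (hG : G.IsAcyclic)
    (v w : V)
    (hGH : ∀ x y, H.Adj x y → x ≠ v → y ≠ v → G.Adj x y)
    (hv : ∀ y, H.Adj v y → y = w) : H.IsAcyclic := by
  intro u c hc
  by_cases hvc : v ∈ c.support
  · have hc' := hc.rotate hvc
    set c' := c.rotate v hvc with hc'def
    clear_value c'
    cases c' with
    | nil => simp [Walk.isCycle_def] at hc'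
    | cons h q =>
      rw [SimpleGraph.Walk.cons_isCycle_iff] at hc'
      obtain ⟨hqpath, hedge⟩ := hc'
      rename_i x
      have hx : x = w := hv x h
      subst hx
      have hnnil : ¬ q.reverse.Nil := Walk.not_nil_of_ne (H.ne_of_adj h)
      have hadj2 : H.Adj v (q.reverse.getVert 1) := by
        simpa [Walk.getVert_zero] using
          q.reverse.adj_getVert_succ (i := 0) (Walk.not_nil_iff_lt_length.mp hnnil)
      have hy := hv _ hadj2
      have hmem : s(v, q.reverse.getVert 1) ∈ q.reverse.edges :=
        firstEdge_mem q.reverse hnnil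
      rw [Walk.edges_reverse, List.mem_reverse, hy] at hmem
      exact hedge hmem
  · have hsub : ∀ e ∈ c.edges, e ∈ G.edgeSet := by
      intro e he
      induction e with
      | h x y =>
        have hadj : H.Adj x y := c.adj_of_mem_edges he
        have hx : x ≠ v := fun hxv => hvc (hxv ▸ c.fst_mem_support_of_mem_edges he)
        have hy : y ≠ v := fun hyv => hvc (hyv ▸ c.snd_mem_support_of_mem_edges he)
        exact hGH x y hadj hx hy
    exact hG (c.transfer G hsub) (hc.transfer hsub)

lemma greedy_acyclic_rigid {n : ℕ} {p q : Fin n → ℝ} {M : Fin n → Fin n → ℝ}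
    (h : Greedy n p q M) :
    (∀ i, 0 ≤ p i) → (∀ j, 0 ≤ q j) → (∑ i, p i = ∑ j, q j) →
    (supportGraph n M).IsAcyclic ∧
      (∀ D : Fin n → Fin n → ℝ, (∀ i, ∑ j, D i j = 0) → (∀ j, ∑ i, D i j = 0) →
        (∀ i j, M i j = 0 → D i j = 0) → ∀ i j, D i j = 0) := by
  induction h with
  | zero =>
    intro _ _ _
    constructor
    · intro u c hc
      cases c with
      | nil => simp [SimpleGraph.Walk.isCycle_def] at hc
      | cons hadj _ =>
        rcases hadj with ⟨i, j, _, _, h0⟩ | ⟨i, j, _, _, h0⟩ <;> exact h0 rfl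
    · intro D _ _ hsupp i j
      exact hsupp i j rfl
  | step p q M a b r ha hb hr hrec ih =>
    intro hp hq hs
    have hr0 : 0 ≤ r := hr ▸ le_min (hp a) (hq b)
    have hrpa : r ≤ p a := hr ▸ min_le_left _ _
    have hrqb : r ≤ q b := hr ▸ min_le_right _ _
    have hp' : ∀ i, 0 ≤ Function.update p a (p a - r) i := by
      intro i
      rcases eq_or_ne i a with rfl | hi
      · simpa using sub_nonneg.2 hrpa
      · simpa [Function.update_of_ne hi] using hp i
    have hq' : ∀ j, 0 ≤ Function.update q b (q b - r) j := by
      intro j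
      rcases eq_or_ne j b with rfl | hj
      · simpa using sub_nonneg.2 hrqb
      · simpa [Function.update_of_ne hj] using hq j
    have hs' : ∑ i, Function.update p a (p a - r) i
        = ∑ j, Function.update q b (q b - r) j := by
      rw [sum_update_aux, sum_update_aux, hs]; ring
    obtain ⟨hMnn, hMrow, hMcol⟩ := greedy_isCoupling hrec hp' hq' hs'
    obtain ⟨hac, hrig⟩ := ih hp' hq' hs'
    rcases min_cases (p a) (q b) with ⟨hre, _⟩ | ⟨hre, _⟩
    · -- r = p a : row a of M is zero
      have hrowa : ∀ j', M a j' = 0 := by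
        have hsum : ∑ j', M a j' = 0 := by
          rw [hMrow a, Function.update_self, hr, hre]; ring
        intro j'
        exact (Finset.sum_eq_zero_iff_of_nonneg fun j' _ => hMnn a j').mp hsum j'
          (Finset.mem_univ _)
      constructor
      · refine acyclic_pendant hac (Sum.inl a) (Sum.inr b) ?_ ?_
        · rintro x y (⟨i, j, rfl, rfl, hij⟩ | ⟨i, j, rfl, rfl, hij⟩) hx hy
          · have hi : i ≠ a := fun hia => hx (by rw [hia])
            exact Or.inl ⟨i, j, rfl, rfl, by simpa [hi] using hij⟩
          · have hi : i ≠ a := fun hia => hy (by rw [hia])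
            exact Or.inr ⟨i, j, rfl, rfl, by simpa [hi] using hij⟩
        · rintro y (⟨i, j, hia, rfl, hij⟩ | ⟨i, j, hia, rfl, hij⟩)
          · have : i = a := by simpa using hia.symm
            subst this
            rcases eq_or_ne j b with rfl | hj
            · rfl
            · exact absurd (by simp [hrowa j, hj]) hij
          · simp at hia
      · intro D hrow hcol hsupp
        have hDaj : ∀ j', j' ≠ b → D a j' = 0 := by
          intro j' hj'
          exact hsupp a j' (by simp [hrowa j', hj'])
        have hDab : D a b = 0 := by
          have h0 := hrow a
          rwa [Finset.sum_eq_single b (fun j' _ hj' => hDaj j' hj') (by simp)] at h0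
        refine hrig D hrow hcol ?_
        intro i' j' hM0
        rcases eq_or_ne i' a with rfl | hi'
        · rcases eq_or_ne j' b with rfl | hj'
          · exact hDab
          · exact hDaj j' hj'
        · exact hsupp i' j' (by simp [hM0, hi'])
    · -- r = q b : column b of M is zero
      have hcolb : ∀ i', M i' b = 0 := by
        have hsum : ∑ i', M i' b = 0 := by
          rw [hMcol b, Function.update_self, hr, hre]; ring
        intro i'
        exact (Finset.sum_eq_zero_iff_of_nonneg fun i' _ => hMnn i' b).mp hsum i'
          (Finset.mem_univ _)
      constructor
      · refine acyclic_pendant hac (Sum.inr b) (Sum.inl a) ?_ ?_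
        · rintro x y (⟨i, j, rfl, rfl, hij⟩ | ⟨i, j, rfl, rfl, hij⟩) hx hy
          · have hj : j ≠ b := fun hjb => hy (by rw [hjb])
            exact Or.inl ⟨i, j, rfl, rfl, by simpa [hj] using hij⟩
          · have hj : j ≠ b := fun hjb => hx (by rw [hjb])
            exact Or.inr ⟨i, j, rfl, rfl, by simpa [hj] using hij⟩
        · rintro y (⟨i, j, hia, rfl, hij⟩ | ⟨i, j, hia, rfl, hij⟩)
          · simp at hia
          · have : j = b := by simpa using hia.symm
            subst this
            rcases eq_or_ne i a with rfl | hi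
            · rfl
            · exact absurd (by simp [hcolb i, hi]) hij
      · intro D hrow hcol hsupp
        have hDib : ∀ i', i' ≠ a → D i' b = 0 := by
          intro i' hi'
          exact hsupp i' b (by simp [hcolb i', hi'])
        have hDab : D a b = 0 := by
          have h0 := hcol b
          rwa [Finset.sum_eq_single a (fun i' _ hi' => hDib i' hi') (by simp)] at h0
        refine hrig D hrow hcol ?_
        intro i' j' hM0
        rcases eq_or_ne j' b with rfl | hj'
        · rcases eq_or_ne i' a with rfl | hi'
          · exact hDab
          · exact hDib i' hi'
        · exact hsupp i' j' (by simp [hM0, hj'])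

lemma mask_bound {n : ℕ} (M : Fin n → Fin n → ℝ)
    (hrig : ∀ D : Fin n → Fin n → ℝ, (∀ i, ∑ j, D i j = 0) → (∀ j, ∑ i, D i j = 0) →
        (∀ i j, M i j = 0 → D i j = 0) → ∀ i j, D i j = 0) :
    ∃ C > 0, ∀ D : Fin n → Fin n → ℝ, (∀ i, ∑ j, D i j = 0) → (∀ j, ∑ i, D i j = 0) →
      ‖D‖ ≤ C * ‖(fun i j => if M i j = 0 then D i j else 0 : Fin n → Fin n → ℝ)‖ := by
  classical
  set W : Submodule ℝ (Fin n → Fin n → ℝ) :=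
    { carrier := {D | (∀ i, ∑ j, D i j = 0) ∧ (∀ j, ∑ i, D i j = 0)}
      add_mem' := by
        rintro x y ⟨hx1, hx2⟩ ⟨hy1, hy2⟩
        constructor
        · intro i; simp only [Pi.add_apply, Finset.sum_add_distrib, hx1 i, hy1 i, add_zero]
        · intro j; simp only [Pi.add_apply, Finset.sum_add_distrib, hx2 j, hy2 j, add_zero]
      zero_mem' := by constructor <;> intro <;> simp
      smul_mem' := by
        rintro c x ⟨hx1, hx2⟩
        constructor
        · intro i; simp only [Pi.smul_apply, smul_eq_mul, ← Finset.mul_sum, hx1 i, mul_zero]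
        · intro j; simp only [Pi.smul_apply, smul_eq_mul, ← Finset.mul_sum, hx2 j, mul_zero] }
    with hW
  set Φ : W →ₗ[ℝ] (Fin n → Fin n → ℝ) :=
    { toFun := fun D => fun i j => if M i j = 0 then (D : Fin n → Fin n → ℝ) i j else 0
      map_add' := by
        intro x y; funext i j; by_cases h : M i j = 0 <;> simp [h]
      map_smul' := by
        intro c x; funext i j; by_cases h : M i j = 0 <;> simp [h] }
    with hΦ
  have hinj : Function.Injective Φ := by
    rw [← LinearMap.ker_eq_bot, LinearMap.ker_eq_bot']
    intro D hD0
    ext i j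
    refine hrig D.1 D.2.1 D.2.2 (fun i j hMij => ?_) i j
    have := congrFun (congrFun hD0 i) j
    simpa [hΦ, hMij] using this
  let e : W ≃ₗ[ℝ] LinearMap.range Φ := LinearEquiv.ofInjective Φ hinj
  let g := LinearMap.toContinuousLinearMap (e.symm : LinearMap.range Φ →ₗ[ℝ] W)
  refine ⟨‖g‖ + 1, by positivity, ?_⟩
  intro D h1 h2
  have hDW : D ∈ W := ⟨h1, h2⟩
  have hkey : ‖(⟨D, hDW⟩ : W)‖ ≤ (‖g‖ + 1) * ‖e ⟨D, hDW⟩‖ := by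
    have h3 : g (e ⟨D, hDW⟩) = ⟨D, hDW⟩ := by
      simp [g, LinearMap.coe_toContinuousLinearMap']
    calc ‖(⟨D, hDW⟩ : W)‖ = ‖g (e ⟨D, hDW⟩)‖ := by rw [h3]
    _ ≤ ‖g‖ * ‖e ⟨D, hDW⟩‖ := g.le_opNorm _
    _ ≤ (‖g‖ + 1) * ‖e ⟨D, hDW⟩‖ := by
        have := norm_nonneg (e ⟨D, hDW⟩); nlinarith [norm_nonneg g]
  have hnorm1 : ‖(⟨D, hDW⟩ : W)‖ = ‖D‖ := rfl
  have hnorm2 : ‖e ⟨D, hDW⟩‖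
      = ‖(fun i j => if M i j = 0 then D i j else 0 : Fin n → Fin n → ℝ)‖ := by
    have : ((e ⟨D, hDW⟩ : LinearMap.range Φ) : Fin n → Fin n → ℝ) = Φ ⟨D, hDW⟩ := by
      simp [e, LinearEquiv.ofInjective_apply]
    rw [show ‖e ⟨D, hDW⟩‖ = ‖((e ⟨D, hDW⟩ : LinearMap.range Φ) : Fin n → Fin n → ℝ)‖ from rfl,
      this]
    rfl
  rw [hnorm1, hnorm2] at hkey
  exact hkey

lemma mul_log_lip {s : ℝ} (hs : 0 < s) : ∃ L ≥ 0, ∀ x ∈ Set.Icc s 2, ∀ y ∈ Set.Icc s 2,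
    |x * Real.log x - y * Real.log y| ≤ L * |x - y| := by
  have hlog2 : (0:ℝ) ≤ Real.log 2 := Real.log_nonneg (by norm_num)
  refine ⟨1 + |Real.log s| + Real.log 2, by positivity, ?_⟩
  intro x hx y hy
  have hbound : ∀ t ∈ Set.Icc s 2, ‖Real.log t + 1‖ ≤ 1 + |Real.log s| + Real.log 2 := by
    intro t ht
    have ht0 : 0 < t := lt_of_lt_of_le hs ht.1
    have h1 : Real.log s ≤ Real.log t := Real.log_le_log hs ht.1
    have h2 : Real.log t ≤ Real.log 2 := Real.log_le_log ht0 ht.2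
    have h3 : |Real.log t| ≤ max |Real.log s| |Real.log 2| := abs_le_max_abs_abs h1 h2
    have h4 : max |Real.log s| |Real.log 2| ≤ |Real.log s| + Real.log 2 := by
      rw [abs_of_nonneg hlog2]
      exact max_le (by linarith [abs_nonneg (Real.log 2)]) (by linarith [abs_nonneg (Real.log s)])
    calc ‖Real.log t + 1‖ ≤ |Real.log t| + 1 := by rw [Real.norm_eq_abs]; simpa using abs_add_le (Real.log t) 1
    _ ≤ 1 + |Real.log s| + Real.log 2 := by linarith
  have := Convex.norm_image_sub_le_of_norm_hasDerivWithin_le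
    (f := fun t : ℝ => t * Real.log t) (f' := fun t : ℝ => Real.log t + 1)
    (s := Set.Icc s 2)
    (fun t ht => (Real.hasDerivAt_mul_log (ne_of_gt (lt_of_lt_of_le hs ht.1))).hasDerivWithinAt)
    hbound (convex_Icc _ _) hy hx
  simpa [Real.norm_eq_abs] using this


/-- **The greedy coupling has acyclic support and is a local optimum.**
Let `p, q` be probability distributions on `[n]` and let `M` be an output of the greedy
coupling procedure applied to `p` and `q`.  Then the bipartite support graph of `M`
contains no cycle; consequently (being a masked submatrix of a rank-1 matrix, hence
satisfying the KKT conditions of the two-marginal minimum entropy coupling problem) `M`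
is a local minimizer of the Shannon entropy over the polytope of couplings of `p` and
`q`. -/
theorem greedy_acyclic_and_local_min
    (n : ℕ) (p q : Fin n → ℝ)
    (hp0 : ∀ i, 0 ≤ p i) (hpsum : ∑ i, p i = 1)
    (hq0 : ∀ j, 0 ≤ q j) (hqsum : ∑ j, q j = 1)
    (M : Fin n → Fin n → ℝ) (hM : Greedy n p q M) :
    (supportGraph n M).IsAcyclic ∧
      IsLocalMinOn matrixEntropy {Q | IsCoupling p q Q} M := by
  classical
  have hsum : ∑ i, p i = ∑ j, q j := by rw [hpsum, hqsum]
  obtain ⟨hMnn, hMrow, hMcol⟩ := greedy_isCoupling hM hp0 hq0 hsum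
  obtain ⟨hac, hrig⟩ := greedy_acyclic_rigid hM hp0 hq0 hsum
  refine ⟨hac, ?_⟩
  have hM1 : ∀ i j, M i j ≤ 1 := by
    intro i j
    have h1 : M i j ≤ ∑ j', M i j' :=
      Finset.single_le_sum (fun j' _ => hMnn i j') (Finset.mem_univ j)
    have h2 : p i ≤ ∑ i', p i' :=
      Finset.single_le_sum (fun i' _ => hp0 i') (Finset.mem_univ i)
    rw [hMrow i] at h1; rw [hpsum] at h2; linarith
  -- support is nonempty
  have hSne : ∃ ij : Fin n × Fin n, M ij.1 ij.2 ≠ 0 := by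
    by_contra hcon
    push_neg at hcon
    have h0 : ∑ i, p i = 0 := by
      have hz : ∀ i, p i = 0 := fun i => by
        rw [← hMrow i]; exact Finset.sum_eq_zero fun j _ => hcon (i, j)
      simp [hz]
    rw [hpsum] at h0; norm_num at h0
  -- minimal nonzero entry
  set T : Finset ℝ := Finset.image (fun ij : Fin n × Fin n => M ij.1 ij.2)
    (Finset.univ.filter fun ij : Fin n × Fin n => M ij.1 ij.2 ≠ 0) with hT
  have hTne : T.Nonempty := by
    obtain ⟨ij, hij⟩ := hSne
    exact ⟨M ij.1 ij.2, Finset.mem_image_of_mem _ (Finset.mem_filter.mpr ⟨Finset.mem_univ _, hij⟩)⟩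
  set smin := T.min' hTne with hsmin
  have hsmin_mem : smin ∈ T := T.min'_mem hTne
  obtain ⟨ij0, hij0mem, hij0eq⟩ := Finset.mem_image.mp hsmin_mem
  have hij0ne : M ij0.1 ij0.2 ≠ 0 := (Finset.mem_filter.mp hij0mem).2
  have hsmin_pos : 0 < smin := by
    rw [← hij0eq]
    exact lt_of_le_of_ne (hMnn ij0.1 ij0.2) (Ne.symm hij0ne)
  have hsmin_le : ∀ i j, M i j ≠ 0 → smin ≤ M i j := by
    intro i j hij
    rw [hsmin]
    apply T.min'_le
    exact Finset.mem_image_of_mem _ (Finset.mem_filter.mpr ⟨Finset.mem_univ (i, j), hij⟩)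
  have hsmin1 : smin ≤ 1 := by
    rw [← hij0eq]; exact hM1 ij0.1 ij0.2
  obtain ⟨L, hL0, hLip⟩ := mul_log_lip (s := smin / 2) (by positivity)
  obtain ⟨C, hC0, hCb⟩ := mask_bound M hrig
  set ε := min (smin / 2) (min 1 (Real.exp (-((n:ℝ)^2 * L * C + 1)))) with hεdef
  have hε0 : 0 < ε := lt_min (by positivity) (lt_min one_pos (Real.exp_pos _))
  have hεs : ε ≤ smin / 2 := min_le_left _ _
  have hε1 : ε ≤ 1 := le_trans (min_le_right _ _) (min_le_left _ _)
  have hlogε : Real.log ε ≤ -((n:ℝ)^2 * L * C + 1) := by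
    calc Real.log ε ≤ Real.log (Real.exp (-((n:ℝ)^2 * L * C + 1))) :=
          Real.log_le_log hε0 (le_trans (min_le_right _ _) (min_le_right _ _))
    _ = -((n:ℝ)^2 * L * C + 1) := Real.log_exp _
  have hlog2 : 0 < Real.log 2 := Real.log_pos one_lt_two
  have hball : Metric.ball M ε ∩ {Q | IsCoupling p q Q}
      ⊆ {Q | matrixEntropy M ≤ matrixEntropy Q} := by
    rintro Q ⟨hQd, hQnn, hQrow, hQcol⟩
    have hQM : ∀ i j, |Q i j - M i j| < ε := by
      intro i j
      have h1 : dist Q M < ε := Metric.mem_ball.mp hQd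
      have h2 : dist (Q i) (M i) ≤ dist Q M := dist_le_pi_dist Q M i
      have h3 : dist (Q i j) (M i j) ≤ dist (Q i) (M i) := dist_le_pi_dist (Q i) (M i) j
      rw [Real.dist_eq] at h3; linarith
    set D : Fin n → Fin n → ℝ := fun i j => Q i j - M i j with hD
    have hDrow : ∀ i, ∑ j, D i j = 0 := fun i => by
      rw [Finset.sum_sub_distrib, hQrow i, hMrow i, sub_self]
    have hDcol : ∀ j, ∑ i, D i j = 0 := fun j => by
      rw [Finset.sum_sub_distrib, hQcol j, hMcol j, sub_self]
    set t := ∑ i, ∑ j, (if M i j = 0 then Q i j else 0) with ht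
    have ht_term : ∀ i j, 0 ≤ (if M i j = 0 then Q i j else 0) := by
      intro i j; split
      · exact hQnn i j
      · exact le_refl 0
    have ht0 : 0 ≤ t :=
      Finset.sum_nonneg fun i _ => Finset.sum_nonneg fun j _ => ht_term i j
    have ht_le : ∀ i j, (if M i j = 0 then Q i j else 0) ≤ t := by
      intro i j
      have hin : (if M i j = 0 then Q i j else 0) ≤ ∑ j', (if M i j' = 0 then Q i j' else 0) :=
        Finset.single_le_sum (fun j' _ => ht_term i j') (Finset.mem_univ j)
      have hout : ∑ j', (if M i j' = 0 then Q i j' else 0) ≤ t :=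
        Finset.single_le_sum
          (f := fun i' => ∑ j', (if M i' j' = 0 then Q i' j' else 0))
          (fun i' _ => Finset.sum_nonneg fun j' _ => ht_term i' j') (Finset.mem_univ i)
      linarith
    have hΦD : (fun i j => if M i j = 0 then D i j else 0 : Fin n → Fin n → ℝ)
        = fun i j => if M i j = 0 then Q i j else 0 := by
      funext i j
      by_cases h : M i j = 0
      · simp [hD, h]
      · simp [h]
    have hmasknorm : ‖(fun i j => if M i j = 0 then D i j else 0 : Fin n → Fin n → ℝ)‖ ≤ t := by
      rw [hΦD]
      refine (pi_norm_le_iff_of_nonneg ht0).mpr fun i => ?_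
      refine (pi_norm_le_iff_of_nonneg ht0).mpr fun j => ?_
      rw [Real.norm_eq_abs, abs_le]
      exact ⟨by linarith [ht_term i j], ht_le i j⟩
    have hDnorm : ‖D‖ ≤ C * t := by
      calc ‖D‖ ≤ C * ‖(fun i j => if M i j = 0 then D i j else 0 : Fin n → Fin n → ℝ)‖ :=
            hCb D hDrow hDcol
      _ ≤ C * t := mul_le_mul_of_nonneg_left hmasknorm hC0.le
    have hDij : ∀ i j, |D i j| ≤ C * t := by
      intro i j
      have h1 : ‖D i j‖ ≤ ‖D i‖ := norm_le_pi_norm (D i) j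
      have h2 : ‖D i‖ ≤ ‖D‖ := norm_le_pi_norm D i
      rw [Real.norm_eq_abs] at h1
      linarith
    -- key termwise inequality
    have hterm : ∀ i j, (if M i j = 0 then (-Real.log ε) * Q i j else -(L * (C * t)))
        ≤ M i j * Real.log (M i j) - Q i j * Real.log (Q i j) := by
      intro i j
      by_cases hij : M i j = 0
      · rw [if_pos hij, hij, zero_mul, zero_sub]
        have hQ0 : 0 ≤ Q i j := hQnn i j
        have hQε : Q i j < ε := by
          have h := hQM i j
          rw [hij, sub_zero, abs_of_nonneg hQ0] at h
          exact h
        rcases eq_or_lt_of_le hQ0 with heq | hpos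
        · rw [← heq]; simp
        · have hlog : Real.log (Q i j) ≤ Real.log ε := Real.log_le_log hpos hQε.le
          nlinarith [mul_le_mul_of_nonneg_left hlog hQ0]
      · rw [if_neg hij]
        have hMs : smin ≤ M i j := hsmin_le i j hij
        have hMIcc : M i j ∈ Set.Icc (smin / 2) 2 :=
          ⟨by linarith, by linarith [hM1 i j]⟩
        have hQIcc : Q i j ∈ Set.Icc (smin / 2) 2 := by
          have habs := hQM i j
          rw [abs_lt] at habs
          exact ⟨by linarith [habs.1], by linarith [habs.2, hM1 i j]⟩
        have hlipMQ := hLip _ hMIcc _ hQIcc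
        have habs2 : |M i j - Q i j| ≤ C * t := by
          rw [abs_sub_comm]
          exact hDij i j
        have h5 := neg_abs_le (M i j * Real.log (M i j) - Q i j * Real.log (Q i j))
        have h6 : L * |M i j - Q i j| ≤ L * (C * t) :=
          mul_le_mul_of_nonneg_left habs2 hL0
        linarith
    -- summing up
    have hsplit : ∀ i j, (if M i j = 0 then (-Real.log ε) * Q i j else -(L * (C * t)))
        = (-Real.log ε) * (if M i j = 0 then Q i j else 0)
          + (if M i j = 0 then 0 else -(L * (C * t))) := by
      intro i j; split <;> simp
    have hsum1 : ∑ i, ∑ j, (if M i j = 0 then (-Real.log ε) * Q i j else -(L * (C * t)))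
        = (-Real.log ε) * t + ∑ i, ∑ j, (if M i j = 0 then 0 else -(L * (C * t))) := by
      simp_rw [hsplit, Finset.sum_add_distrib, ← Finset.mul_sum]
      rfl
    have hsum2 : (n:ℝ) * ((n:ℝ) * (-(L * (C * t))))
        ≤ ∑ i, ∑ j, (if M i j = 0 then (0:ℝ) else -(L * (C * t))) := by
      have hterm2 : ∀ i j : Fin n, -(L * (C * t)) ≤ (if M i j = 0 then (0:ℝ) else -(L * (C * t))) := by
        intro i j; split
        · exact neg_nonpos.mpr (mul_nonneg hL0 (mul_nonneg hC0.le ht0))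
        · exact le_refl _
      calc (n:ℝ) * ((n:ℝ) * (-(L * (C * t))))
          = ∑ _i : Fin n, ∑ _j : Fin n, -(L * (C * t)) := by
            simp [Finset.sum_const, Finset.card_univ]
      _ ≤ _ := Finset.sum_le_sum fun i _ => Finset.sum_le_sum fun j _ => hterm2 i j
    have hmain : 0 ≤ ∑ i, ∑ j, (M i j * Real.log (M i j) - Q i j * Real.log (Q i j)) := by
      have hbig : ∑ i, ∑ j, (if M i j = 0 then (-Real.log ε) * Q i j else -(L * (C * t)))
          ≤ ∑ i, ∑ j, (M i j * Real.log (M i j) - Q i j * Real.log (Q i j)) :=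
        Finset.sum_le_sum fun i _ => Finset.sum_le_sum fun j _ => hterm i j
      have hlow : 0 ≤ (-Real.log ε) * t + (n:ℝ) * ((n:ℝ) * (-(L * (C * t)))) := by
        nlinarith [ht0, hlogε, sq_nonneg ((n:ℝ))]
      rw [hsum1] at hbig
      linarith [hsum2]
    -- convert to entropy
    have hent : ∀ P : Fin n → Fin n → ℝ,
        matrixEntropy P = -((∑ i, ∑ j, P i j * Real.log (P i j)) / Real.log 2) := by
      intro P
      rw [matrixEntropy]
      congr 1
      rw [Finset.sum_div]
      refine Finset.sum_congr rfl fun i _ => ?_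
      rw [Finset.sum_div]
      refine Finset.sum_congr rfl fun j _ => ?_
      rw [Real.logb, mul_div_assoc]
    have hmain' : ∑ i, ∑ j, Q i j * Real.log (Q i j) ≤ ∑ i, ∑ j, M i j * Real.log (M i j) := by
      have h := hmain
      simp_rw [Finset.sum_sub_distrib] at h
      linarith
    show matrixEntropy M ≤ matrixEntropy Q
    rw [hent M, hent Q]
    gcongr
  exact Metric.mem_nhdsWithin_iff.mpr ⟨ε, hε0, hball⟩
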